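/- arXiv:1211.4286 — 4 statements merged into one kernel-verified Lean document; each statement's English description precedes it below -/
import Mathlib

section
/- Any subgroup H of odd order of the group W₁ generated by diagonal ±1 matrices of determinant 1 and monomial matrices in GL_n(ℤ) is conjugate, by an element of the diagonal subgroup D₁ of determinant-1 sign matrices, to its image m(H) under the canonical splitting map onto the monomial matrices. -/
/-- Membership in `W₁ = D₁ ⋊ M ≤ GLₙ(ℤ)`: a signed permutation matrix whose sign part has
determinant `1`, i.e. whose nonzero entries (all `±1`) multiply to `1`. -/
def MemW1 {n : ℕ} (A : Matrix (Fin n) (Fin n) ℤ) : Prop :=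
  ∃ (σ : Equiv.Perm (Fin n)) (ε : Fin n → ℤ),
    (∀ j, ε j = 1 ∨ ε j = -1) ∧ (∏ j, ε j) = 1 ∧
      ∀ i j, A i j = if i = σ j then ε j else 0

/-- Any subgroup `H` of odd order of the group `W₁` generated by the diagonal `±1` matrices of
determinant `1` and the monomial (permutation) matrices in `GLₙ(ℤ)` is conjugate, by an element
`δ` of the group `D₁` of determinant-one sign matrices, to its image `m(H)` under the canonical
splitting `m : W₁ → M` onto the permutation matrices (here `m(h)` has entries `|h i j|`, and
`δ⁻¹ = δ`). -/
theorem odd_order_subgroup_of_W1_conjugate_to_permutation_part {n : ℕ}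
    (H : Subgroup (Matrix (Fin n) (Fin n) ℤ)ˣ)
    (hW : ∀ h ∈ H, MemW1 (h : Matrix (Fin n) (Fin n) ℤ))
    (hodd : Odd (Nat.card H)) :
    ∃ δ : Matrix (Fin n) (Fin n) ℤ,
      (∀ i, δ i i = 1 ∨ δ i i = -1) ∧ (∀ i j, i ≠ j → δ i j = 0) ∧ δ.det = 1 ∧
      δ * δ = 1 ∧
      ∀ h ∈ H, (h : Matrix (Fin n) (Fin n) ℤ)
        = δ * (Matrix.of fun i j => |(h : Matrix (Fin n) (Fin n) ℤ) i j|) * δ := by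
  have hfin : Finite H := Nat.finite_of_card_ne_zero (by
    intro h0; rw [h0] at hodd; simp [Nat.odd_iff] at hodd)
  haveI : Fintype H := Fintype.ofFinite H
  choose σ ε hε1 hεprod hentry using fun (h : H) => hW h.1 h.2
  -- uniqueness of the (σ, ε) representation
  have huniq : ∀ (h : H) (σ' : Equiv.Perm (Fin n)) (ε' : Fin n → ℤ),
      (∀ j, ε' j ≠ 0) →
      (∀ i j, ((h : (Matrix (Fin n) (Fin n) ℤ)ˣ) : Matrix (Fin n) (Fin n) ℤ) i j
        = if i = σ' j then ε' j else 0) →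
      (∀ j, σ' j = σ h j) ∧ (∀ j, ε' j = ε h j) := by
    intro h σ' ε' hne hrep
    have key : ∀ j, σ' j = σ h j ∧ ε' j = ε h j := by
      intro j
      have h1 := hrep (σ' j) j
      have h2 := hentry h (σ' j) j
      rw [if_pos rfl] at h1
      rw [h1] at h2
      by_cases hc : σ' j = σ h j
      · exact ⟨hc, by rwa [if_pos hc] at h2⟩
      · rw [if_neg hc] at h2; exact absurd h2 (hne j)
    exact ⟨fun j => (key j).1, fun j => (key j).2⟩
  have hεne : ∀ (h : H) j, ε h j ≠ 0 := by
    intro h j; rcases hε1 h j with e | e <;> rw [e] <;> decide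
  -- cocycle relation
  have hcoc : ∀ (g h : H) (j : Fin n),
      σ (g * h) j = σ g (σ h j) ∧ ε (g * h) j = ε g (σ h j) * ε h j := by
    intro g h j
    have hrep : ∀ i j, ((g * h : H) : (Matrix (Fin n) (Fin n) ℤ)ˣ).1 i j
        = if i = ((σ h).trans (σ g)) j then (fun j => ε g (σ h j) * ε h j) j else 0 := by
      intro i j
      have : ((g * h : H) : (Matrix (Fin n) (Fin n) ℤ)ˣ).1
          = ((g : (Matrix (Fin n) (Fin n) ℤ)ˣ) : Matrix (Fin n) (Fin n) ℤ)
            * ((h : (Matrix (Fin n) (Fin n) ℤ)ˣ) : Matrix (Fin n) (Fin n) ℤ) := rfl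
      rw [this, Matrix.mul_apply]
      rw [Finset.sum_eq_single (σ h j)]
      · rw [hentry g i (σ h j), hentry h (σ h j) j, if_pos rfl]
        simp only [Equiv.trans_apply]
        by_cases hc : i = σ g (σ h j) <;> simp [hc, mul_comm]
      · intro k _ hk
        rw [hentry h k j, if_neg (by exact fun hkk => hk hkk), mul_zero]
      · intro hk; exact absurd (Finset.mem_univ _) hk
    have := huniq (g * h) ((σ h).trans (σ g)) (fun j => ε g (σ h j) * ε h j)
      (fun j => mul_ne_zero (hεne g _) (hεne h j)) hrep
    exact ⟨(this.1 j).symm, (this.2 j).symm⟩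
  -- the coboundary
  set d : Fin n → ℤ := fun j => ∏ h : H, ε h j with hd
  have hsq : ∀ (x : ℤ), (x = 1 ∨ x = -1) → x * x = 1 := by
    rintro x (rfl | rfl) <;> decide
  have hd2 : ∀ j, d j * d j = 1 := by
    intro j
    rw [hd]
    simp only
    rw [← Finset.prod_mul_distrib]
    exact Finset.prod_eq_one fun h _ => hsq _ (hε1 h j)
  have hd1 : ∀ j, d j = 1 ∨ d j = -1 := by
    intro j
    exact Int.isUnit_iff.mp (IsUnit.of_mul_eq_one _ (hd2 j))
  -- the key coboundary identity
  have hkey : ∀ (g : H) (j : Fin n), d (σ g j) * d j = ε g j := by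
    intro g j
    have h1 : ∀ h : H, ε h (σ g j) = ε (h * g) j * ε g j := by
      intro h
      have := (hcoc h g j).2
      rw [this, mul_assoc, hsq _ (hε1 g j), mul_one]
    have h2 : d (σ g j) = d j * ε g j := by
      calc d (σ g j) = ∏ h : H, ε h (σ g j) := rfl
        _ = ∏ h : H, (ε (h * g) j * ε g j) := Finset.prod_congr rfl fun h _ => h1 h
        _ = (∏ h : H, ε (h * g) j) * (∏ _h : H, ε g j) := Finset.prod_mul_distrib
        _ = (∏ h : H, ε h j) * (ε g j) ^ Fintype.card H := by
            rw [Finset.prod_const, Finset.card_univ]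
            congr 1
            exact Fintype.prod_equiv (Equiv.mulRight g) _ _ (fun h => rfl)
        _ = d j * ε g j := by
            congr 1
            rcases hε1 g j with e | e
            · rw [e, one_pow]
            · rw [e, Odd.neg_one_pow (by rwa [← Nat.card_eq_fintype_card])]
    rw [h2, mul_comm (d j) (ε g j), mul_assoc, hd2 j, mul_one]
  refine ⟨Matrix.diagonal d, ?_, ?_, ?_, ?_, ?_⟩
  · intro i; simpa using hd1 i
  · intro i j hij; exact Matrix.diagonal_apply_ne d hij
  · rw [Matrix.det_diagonal]
    calc ∏ j, d j = ∏ j, ∏ h : H, ε h j := rfl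
      _ = ∏ h : H, ∏ j, ε h j := Finset.prod_comm
      _ = 1 := Finset.prod_eq_one fun h _ => hεprod h
  · ext i j
    rw [Matrix.diagonal_mul_diagonal]
    by_cases hij : i = j
    · subst hij; rw [Matrix.diagonal_apply_eq, Matrix.one_apply_eq]; exact hd2 i
    · rw [Matrix.diagonal_apply_ne _ hij, Matrix.one_apply_ne hij]
  · intro h hh
    set g : H := ⟨h, hh⟩ with hg
    have habs : ∀ i j, |(h : Matrix (Fin n) (Fin n) ℤ) i j|
        = if i = σ g j then 1 else 0 := by
      intro i j
      have : (h : Matrix (Fin n) (Fin n) ℤ) i j = if i = σ g j then ε g j else 0 :=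
        hentry g i j
      rw [this]
      split
      · rcases hε1 g j with e | e <;> rw [e] <;> decide
      · decide
    ext i j
    rw [Matrix.mul_diagonal, Matrix.diagonal_mul, Matrix.of_apply, habs i j,
      hentry g i j]
    by_cases hc : i = σ g j
    · rw [if_pos hc, if_pos hc, hc, mul_one, hkey g j]
    · rw [if_neg hc, if_neg hc, mul_zero, zero_mul]
end

section
/- Let d ≥ 1, X a set with 2d−1 elements, G a solvable subgroup of Sym(X) permuting transitively the d-element subsets of X, o ∈ X, and G_o the stabilizer of o. If G is transitive on X, then G_o is a maximal subgroup of G. -/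
/-- Let `d ≥ 1`, `X` a set with `2d − 1` elements, `G` a solvable subgroup of `Sym(X)` permuting
transitively the `d`-element subsets of `X`, `o ∈ X`, and `G_o` the stabilizer of `o` in `G`.
If `G` is transitive on `X`, then `G_o` is a maximal subgroup of `G`. -/
theorem stabilizer_is_maximal_subgroup
    {X : Type*} [Fintype X] [DecidableEq X] {d : ℕ} (hd : 1 ≤ d)
    (hcard : Fintype.card X = 2 * d - 1)
    (G : Subgroup (Equiv.Perm X)) (hsolv : IsSolvable G)
    (htrans : ∀ s t : Finset X, s.card = d → t.card = d → ∃ g ∈ G, s.image ⇑g = t)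
    (o : X)
    (htransX : ∀ x y : X, ∃ g ∈ G, g x = y) :
    ¬ ∃ H : Subgroup G,
        (MulAction.stabilizer (Equiv.Perm X) o).comap G.subtype < H ∧ H < ⊤ := by
  classical
  rintro ⟨H, hKH, hHtop⟩
  set K := (MulAction.stabilizer (Equiv.Perm X) o).comap G.subtype with hK
  have hKmem : ∀ g : G, g ∈ K ↔ (g : Equiv.Perm X) o = o := by
    intro g
    simp [hK, Subgroup.mem_comap, MulAction.mem_stabilizer_iff, Equiv.Perm.smul_def, Subgroup.mem_subgroupOf]
  -- orbit of o under H as a Finset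
  set Bf : Finset X := Finset.univ.filter (fun x => ∃ h : H, ((h : G) : Equiv.Perm X) o = x) with hBf
  have hmemB : ∀ x, x ∈ Bf ↔ ∃ h : H, ((h : G) : Equiv.Perm X) o = x := by
    intro x; simp [hBf]
  have hoB : o ∈ Bf := (hmemB o).2 ⟨1, by simp⟩
  have gmem : ∀ g : G, (g : Equiv.Perm X) o ∈ Bf → g ∈ H := by
    intro g hg
    obtain ⟨h, hh⟩ := (hmemB _).1 hg
    have h1 : ((h : G))⁻¹ * g ∈ K := by
      rw [hKmem]
      push_cast
      simp [Function.comp, ← hh]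
    have h2 : ((h : G))⁻¹ * g ∈ H := hKH.le h1
    simpa using mul_mem h.2 h2
  -- H maps Bf to itself
  have hHimage : ∀ g : G, g ∈ H → Bf.image ((g : Equiv.Perm X)) = Bf := by
    intro g hg
    apply Finset.eq_of_subset_of_card_le
    · intro x hx
      rw [Finset.mem_image] at hx
      obtain ⟨y, hy, hgy⟩ := hx
      obtain ⟨h1, hh1⟩ := (hmemB y).1 hy
      refine (hmemB x).2 ⟨⟨g, hg⟩ * h1, ?_⟩
      push_cast
      simp [Function.comp, hh1, hgy]
    · rw [Finset.card_image_of_injective _ (Equiv.injective _)]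
  have hover : ∀ g : G, ((Bf.image ((g : Equiv.Perm X))) ∩ Bf).Nonempty → g ∈ H := by
    rintro g ⟨z, hz⟩
    rw [Finset.mem_inter, Finset.mem_image] at hz
    obtain ⟨⟨b1, hb1, hgb1⟩, hz2⟩ := hz
    obtain ⟨h1, hh1⟩ := (hmemB b1).1 hb1
    have hgh : (g * (h1 : G)) ∈ H := by
      apply gmem
      push_cast
      simpa [Function.comp, hh1, hgb1] using hz2
    simpa using mul_mem hgh (inv_mem h1.2)
  have heq : ∀ g1 g2 : G,
      ((Bf.image ((g1 : Equiv.Perm X))) ∩ (Bf.image ((g2 : Equiv.Perm X)))).Nonempty →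
      Bf.image ((g1 : Equiv.Perm X)) = Bf.image ((g2 : Equiv.Perm X)) := by
    rintro g1 g2 ⟨z, hz⟩
    rw [Finset.mem_inter] at hz
    obtain ⟨hz1, hz2⟩ := hz
    rw [Finset.mem_image] at hz1 hz2
    obtain ⟨b1, hb1, hgb1⟩ := hz1
    obtain ⟨b2, hb2, hgb2⟩ := hz2
    have hmemH : g2⁻¹ * g1 ∈ H := by
      apply hover
      refine ⟨b2, Finset.mem_inter.2 ⟨?_, hb2⟩⟩
      rw [Finset.mem_image]
      refine ⟨b1, hb1, ?_⟩
      push_cast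
      simp [Function.comp, hgb1, ← hgb2]
    have himg := hHimage _ hmemH
    have : (Bf.image (((g2⁻¹ * g1 : G) : Equiv.Perm X))).image ((g2 : Equiv.Perm X))
        = Bf.image ((g2 : Equiv.Perm X)) := by rw [himg]
    rw [Finset.image_image] at this
    rw [← this]
    congr 1
    ext x
    push_cast
    simp [Function.comp]
  -- block of x
  have hσ' : ∀ x : X, ∃ g : G, (g : Equiv.Perm X) o = x := by
    intro x
    obtain ⟨g, hgG, hgo⟩ := htransX o x
    exact ⟨⟨g, hgG⟩, hgo⟩
  choose σ hσ using hσ'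
  set blk : X → Finset X := fun x => Bf.image ((σ x : Equiv.Perm X)) with hblk
  have hxblk : ∀ x, x ∈ blk x := fun x => Finset.mem_image.2 ⟨o, hoB, hσ x⟩
  have hcardblk : ∀ x, (blk x).card = Bf.card :=
    fun x => Finset.card_image_of_injective _ (Equiv.injective _)
  have hblkeq : ∀ x y, ((blk x) ∩ (blk y)).Nonempty → blk x = blk y :=
    fun x y h => heq (σ x) (σ y) h
  have htransl : ∀ g : G, Bf.image ((g : Equiv.Perm X)) = blk ((g : Equiv.Perm X) o) := by
    intro g
    apply heq
    exact ⟨(g : Equiv.Perm X) o,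
      Finset.mem_inter.2 ⟨Finset.mem_image_of_mem _ hoB, hxblk _⟩⟩
  have hblkoeq : blk o = Bf := by
    have h0 := htransl 1
    simp only [OneMemClass.coe_one, Equiv.Perm.coe_one, Finset.image_id, id_eq] at h0
    rw [← h0]
  -- the set of blocks
  set T : Finset (Finset X) := Finset.univ.image blk with hT
  have hcards : ∀ C ∈ T, C.card = Bf.card := by
    intro C hC
    rw [hT, Finset.mem_image] at hC
    obtain ⟨x, -, hx⟩ := hC
    rw [← hx]; exact hcardblk x
  have hTdisj : ∀ C ∈ T, ∀ C' ∈ T, C ≠ C' → Disjoint C C' := by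
    intro C hC C' hC' hne
    rw [hT, Finset.mem_image] at hC hC'
    obtain ⟨x, -, hx⟩ := hC
    obtain ⟨y, -, hy⟩ := hC'
    rw [Finset.disjoint_left]
    intro z hz hz'
    apply hne
    rw [← hx, ← hy]
    exact hblkeq x y ⟨z, Finset.mem_inter.2 ⟨hx ▸ hz, hy ▸ hz'⟩⟩
  have huniv : Finset.univ = T.biUnion (fun C => C) := by
    ext x
    simp only [Finset.mem_univ, true_iff, Finset.mem_biUnion]
    exact ⟨blk x, by rw [hT]; exact Finset.mem_image_of_mem _ (Finset.mem_univ x), hxblk x⟩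
  have hcount : Fintype.card X = T.card * Bf.card := by
    rw [← Finset.card_univ, huniv, Finset.card_biUnion hTdisj]
    rw [Finset.sum_congr rfl (fun C hC => hcards C hC)]
    simp [mul_comm]
  -- b ≥ 2
  have hb2 : 2 ≤ Bf.card := by
    obtain ⟨h, hhH, hhK⟩ := SetLike.exists_of_lt hKH
    have hho : (h : Equiv.Perm X) o ≠ o := fun hc => hhK ((hKmem h).2 hc)
    have hhB : (h : Equiv.Perm X) o ∈ Bf := (hmemB _).2 ⟨⟨h, hhH⟩, rfl⟩
    exact Finset.one_lt_card.2 ⟨_, hhB, o, hoB, hho⟩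
  -- k ≥ 2
  have hBfT : Bf ∈ T := by
    rw [← hblkoeq, hT]; exact Finset.mem_image_of_mem _ (Finset.mem_univ o)
  have hk2 : 2 ≤ T.card := by
    obtain ⟨g0, -, hg0H⟩ := SetLike.exists_of_lt hHtop
    have hx0 : (g0 : Equiv.Perm X) o ∉ Bf := fun hc => hg0H (gmem g0 hc)
    refine Finset.one_lt_card.2 ⟨blk ((g0 : Equiv.Perm X) o), ?_, Bf, hBfT, ?_⟩
    · rw [hT]; exact Finset.mem_image_of_mem _ (Finset.mem_univ _)
    · intro hc
      exact hx0 (hc ▸ hxblk _)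
  -- arithmetic facts
  have hmul1 : 2 * Bf.card ≤ T.card * Bf.card := Nat.mul_le_mul_right _ hk2
  have hmul2 : T.card * 2 ≤ T.card * Bf.card := Nat.mul_le_mul_left _ hb2
  have hbd : Bf.card ≤ d := by omega
  have hkd : T.card ≤ d - 1 := by omega
  -- S1 : a d-subset containing Bf
  obtain ⟨S1, hBS1, hS1card⟩ := Finset.exists_superset_card_eq hbd (by omega)
  -- choose a marked point in each block
  have hXne : Nonempty X := Fintype.card_pos_iff.1 (by omega)
  obtain ⟨x0⟩ := hXne
  have hTne : ∀ C : Finset X, ∃ x : X, C ∈ T → x ∈ C := by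
    intro C
    by_cases hC : C ∈ T
    · obtain ⟨x, hx⟩ := Finset.card_pos.1 (by rw [hcards C hC]; omega)
      exact ⟨x, fun _ => hx⟩
    · exact ⟨x0, fun h => absurd h hC⟩
  choose a ha using hTne
  set S0 : Finset X := T.biUnion (fun C => C.erase (a C)) with hS0
  have haS0 : ∀ C ∈ T, a C ∉ S0 := by
    intro C hC hmem
    rw [hS0, Finset.mem_biUnion] at hmem
    obtain ⟨C', hC', hmem'⟩ := hmem
    by_cases hCC : C = C'
    · subst hCC
      exact Finset.notMem_erase _ _ hmem'
    · exact (Finset.disjoint_left.1 (hTdisj C hC C' hC' hCC)) (ha C hC)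
        (Finset.mem_of_mem_erase hmem')
  have hS0card : S0.card = T.card * (Bf.card - 1) := by
    rw [hS0, Finset.card_biUnion]
    · rw [Finset.sum_congr rfl
        (fun C hC => by rw [Finset.card_erase_of_mem (ha C hC), hcards C hC])]
      simp [mul_comm]
    · intro C hC C' hC' hne
      exact Finset.disjoint_of_subset_left (Finset.erase_subset _ _)
        (Finset.disjoint_of_subset_right (Finset.erase_subset _ _) (hTdisj C hC C' hC' hne))
  have hmul3 : T.card * Bf.card = T.card * (Bf.card - 1) + T.card := by
    have hb1 : Bf.card - 1 + 1 = Bf.card := by omega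
    calc T.card * Bf.card = T.card * ((Bf.card - 1) + 1) := by rw [hb1]
    _ = T.card * (Bf.card - 1) + T.card := by ring
  have hS0d : d ≤ S0.card := by omega
  obtain ⟨S2, hS2S0, hS2card⟩ := Finset.exists_subset_card_eq hS0d
  -- transitivity on d-subsets gives the contradiction
  obtain ⟨g, hgG, hgim⟩ := htrans S1 S2 hS1card hS2card
  have hBg : Bf.image g ⊆ S2 := by
    rw [← hgim]
    exact Finset.image_subset_image hBS1
  have htr := htransl ⟨g, hgG⟩
  have hCT : blk (g o) ∈ T := by rw [hT]; exact Finset.mem_image_of_mem _ (Finset.mem_univ _)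
  have haC : a (blk (g o)) ∈ S2 := by
    apply hBg
    rw [htr]
    exact ha _ hCT
  exact haS0 _ hCT (hS2S0 haC)
end

section
/- Let d ≥ 1 be an integer, X a finite set with 2d elements, and G a solvable subgroup of Sym(X) permuting transitively the subsets of X of cardinality d. Then either |X|=2 and G = Sym(X), or |X|=4 and G is Sym(X) or Alt(X). -/
open Equiv Finset
open scoped commutatorElement

private lemma orbit_card_dvd' {H : Type*} [Group H] [Finite H] {α : Type*} [MulAction H α]
    (a : α) : Nat.card (MulAction.orbit H a) ∣ Nat.card H := by
  rw [Nat.card_congr (MulAction.orbitEquivQuotientStabilizer H a)]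
  exact ⟨Nat.card (MulAction.stabilizer H a),
    Subgroup.card_eq_card_quotient_mul_card_subgroup _⟩

private lemma modeq_fix' {β : Type*} [Finite β] {p : ℕ} (hp : p.Prime) (π : Equiv.Perm β)
    (h : π ^ p = 1) :
    Nat.card {b : β // π b = b} ≡ Nat.card β [MOD p] := by
  classical
  set H := Subgroup.zpowers π with hH
  have hpg : IsPGroup p ↥H := by
    intro g
    obtain ⟨k, hk⟩ := Subgroup.mem_zpowers_iff.mp g.2
    refine ⟨1, ?_⟩
    rw [pow_one]
    ext1
    push_cast
    rw [← hk, ← zpow_natCast (π ^ k) p, ← zpow_mul, mul_comm, zpow_mul, zpow_natCast, h, one_zpow]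
  haveI : Fact p.Prime := ⟨hp⟩
  have key := hpg.card_modEq_card_fixedPoints β
  have hfix : MulAction.fixedPoints (↥H) β = {b | π b = b} := by
    ext b
    simp only [MulAction.mem_fixedPoints, Set.mem_setOf_eq]
    constructor
    · intro hb
      have := hb ⟨π, Subgroup.mem_zpowers π⟩
      simpa using this
    · intro hb g
      obtain ⟨k, hk⟩ := Subgroup.mem_zpowers_iff.mp g.2
      have : (g : Equiv.Perm β) b = b := by
        rw [← hk]
        exact Function.IsFixedPt.perm_zpow hb k
      exact this
  rw [hfix] at key
  exact key.symm

private lemma nofix_dvd' {β : Type*} [Finite β] {p : ℕ} (hp : p.Prime) (π : Equiv.Perm β)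
    (h : π ^ p = 1) (hnf : ∀ b, π b ≠ b) : p ∣ Nat.card β := by
  have := modeq_fix' hp π h
  have he : IsEmpty {b : β // π b = b} := ⟨fun b => hnf b.1 b.2⟩
  rw [Nat.card_of_isEmpty] at this
  exact (Nat.modEq_zero_iff_dvd).mp this.symm

private lemma inv_lemma' {X : Type*} [Fintype X] [DecidableEq X] {d : ℕ} (hd : 1 ≤ d)
    (hcard : Fintype.card X = 2 * d)
    (G : Subgroup (Equiv.Perm X))
    (htrans : ∀ s t : Finset X, s.card = d → t.card = d → ∃ g ∈ G, s.image ⇑g = t)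
    (F : Finset X) (hF : ∀ g ∈ G, ∀ x ∈ F, g x ∈ F) : F = ∅ ∨ F = Finset.univ := by
  classical
  have huniv : (Finset.univ : Finset X).card = 2 * d := by rw [Finset.card_univ, hcard]
  have hinv : ∀ g ∈ G, ∀ s : Finset X, (s.image ⇑g ∩ F).card = (s ∩ F).card := by
    intro g hg s
    have himg : s.image ⇑g ∩ F = (s ∩ F).image ⇑g := by
      ext y
      simp only [Finset.mem_inter, Finset.mem_image]
      constructor
      · rintro ⟨⟨x, hx, rfl⟩, hyF⟩
        refine ⟨x, ⟨hx, ?_⟩, rfl⟩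
        have := hF g⁻¹ (inv_mem hg) _ hyF
        simpa using this
      · rintro ⟨x, ⟨hxs, hxF⟩, rfl⟩
        exact ⟨⟨x, hxs, rfl⟩, hF g hg x hxF⟩
    rw [himg, Finset.card_image_of_injective _ g.injective]
  by_contra hcon
  push_neg at hcon
  obtain ⟨hne, hnu⟩ := hcon
  obtain ⟨x, hx⟩ := hne
  obtain ⟨y, hy⟩ : ∃ y, y ∉ F := by
    by_contra hall
    push_neg at hall
    exact hnu (Finset.eq_univ_iff_forall.mpr hall)
  rcases le_or_gt F.card d with h1 | h2
  · obtain ⟨s, hFs, -, hs⟩ := Finset.exists_subsuperset_card_eq (Finset.subset_univ F) h1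
      (by omega)
    have hcompl : d ≤ (Finset.univ \ F).card := by
      rw [Finset.card_univ_diff, hcard]; omega
    obtain ⟨t, hts, ht⟩ := Finset.exists_subset_card_eq hcompl
    obtain ⟨g, hg, hgst⟩ := htrans s t hs ht
    have hkey := hinv g hg s
    rw [hgst] at hkey
    have h1' : t ∩ F = ∅ := by
      apply Finset.eq_empty_of_forall_notMem
      intro z hz
      rw [Finset.mem_inter] at hz
      exact (Finset.mem_sdiff.mp (hts hz.1)).2 hz.2
    have h2' : s ∩ F = F := by
      rw [Finset.inter_eq_right]; exact hFs
    rw [h1', h2'] at hkey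
    simp only [Finset.card_empty] at hkey
    have : 0 < F.card := Finset.card_pos.mpr ⟨x, hx⟩
    omega
  · obtain ⟨s, hsF, hs⟩ := Finset.exists_subset_card_eq (le_of_lt h2)
    obtain ⟨s', hs'F, hs'⟩ := Finset.exists_subset_card_eq (show d - 1 ≤ F.card by omega)
    have hys' : y ∉ s' := fun h => hy (hs'F h)
    set t := insert y s' with htdef
    have ht : t.card = d := by
      rw [htdef, Finset.card_insert_of_notMem hys', hs']; omega
    obtain ⟨g, hg, hgst⟩ := htrans s t hs ht
    have hkey := hinv g hg s
    rw [hgst] at hkey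
    have h1' : t ∩ F = s' := by
      ext z
      simp only [htdef, Finset.mem_inter, Finset.mem_insert]
      constructor
      · rintro ⟨rfl | hz, hzF⟩
        · exact absurd hzF hy
        · exact hz
      · intro hz
        exact ⟨Or.inr hz, hs'F hz⟩
    have h2' : s ∩ F = s := by rw [Finset.inter_eq_left]; exact hsF
    rw [h1', h2', hs, hs'] at hkey
    omega

private lemma trans_lemma' {X : Type*} [Fintype X] [DecidableEq X] {d : ℕ} (hd : 1 ≤ d)
    (hcard : Fintype.card X = 2 * d)
    (G : Subgroup (Equiv.Perm X))
    (htrans : ∀ s t : Finset X, s.card = d → t.card = d → ∃ g ∈ G, s.image ⇑g = t)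
    (inv_lem : ∀ F : Finset X, (∀ g ∈ G, ∀ x ∈ F, g x ∈ F) → F = ∅ ∨ F = Finset.univ)
    (A : Subgroup (Equiv.Perm X))
    (hnorm : ∀ g ∈ G, ∀ a ∈ A, g * a * g⁻¹ ∈ A)
    (hA : A ≠ ⊥) : ∀ x y : X, ∃ a ∈ A, a x = y := by
  classical
  -- every point is moved by some element of A
  have hFix : ∀ x : X, ∃ a ∈ A, a x ≠ x := by
    set F : Finset X := Finset.univ.filter (fun x => ∀ a ∈ A, a x = x) with hFdef
    have hFinv : ∀ g ∈ G, ∀ x ∈ F, g x ∈ F := by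
      intro g hg x hx
      simp only [hFdef, Finset.mem_filter, Finset.mem_univ, true_and] at hx ⊢
      intro a ha
      have h1 := hnorm g⁻¹ (inv_mem hg) a ha
      rw [inv_inv] at h1
      have h2 := hx _ h1
      have h3 : g ((g⁻¹ * a * g) x) = g x := by rw [h2]
      simpa [Equiv.Perm.mul_apply] using h3
    rcases inv_lem F hFinv with h | h
    · intro x
      by_contra hc
      push_neg at hc
      have : x ∈ F := by
        simp only [hFdef, Finset.mem_filter, Finset.mem_univ, true_and]
        exact hc
      rw [h] at this
      exact absurd this (Finset.notMem_empty x)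
    · exfalso
      apply hA
      rw [Subgroup.eq_bot_iff_forall]
      intro a ha
      ext x
      have : x ∈ F := h ▸ Finset.mem_univ x
      simp only [hFdef, Finset.mem_filter, Finset.mem_univ, true_and] at this
      simpa using this a ha
  -- the orbit equivalence relation
  letI S : Setoid X := ⟨fun x y => ∃ a ∈ A, a x = y,
    ⟨fun x => ⟨1, one_mem A, rfl⟩,
     fun {x y} ⟨a, ha, hax⟩ => ⟨a⁻¹, inv_mem ha, by rw [← hax]; exact a.symm_apply_apply x⟩,
     fun {x y z} ⟨a, ha, hax⟩ ⟨b, hb, hby⟩ =>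
       ⟨b * a, mul_mem hb ha, by rw [Equiv.Perm.mul_apply, hax, hby]⟩⟩⟩
  set rep : X → X := fun x => (⟦x⟧ : Quotient S).out with hrepdef
  have hrepR : ∀ x : X, ∃ a ∈ A, a (rep x) = x := fun x => Quotient.mk_out x
  have hrepEq : ∀ x y : X, (∃ a ∈ A, a x = y) → rep x = rep y := by
    intro x y h
    simp only [hrepdef]
    rw [Quotient.sound h]
  set T : Finset X := Finset.univ.image rep with hTdef
  have hrepT : ∀ x ∈ T, rep x = x := by
    intro x hx
    simp only [hTdef, Finset.mem_image, Finset.mem_univ, true_and] at hx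
    obtain ⟨z, rfl⟩ := hx
    exact hrepEq (rep z) z (hrepR z)
  choose wa hwamem hwane using hFix
  set w : X → X := fun x => wa x x with hwdef
  have hwR : ∀ x, ∃ a ∈ A, a x = w x := fun x => ⟨wa x, hwamem x, rfl⟩
  have hwne : ∀ x, w x ≠ x := hwane
  have hwT : ∀ x ∈ T, w x ∉ T := by
    intro x hx hwx
    have h1 : rep (w x) = w x := hrepT _ hwx
    have h2 : rep x = rep (w x) := hrepEq x (w x) (hwR x)
    have h3 : rep x = x := hrepT x hx
    exact hwne x ((h1.symm.trans h2.symm).trans h3)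
  have hTcard : T.card ≤ (Finset.univ \ T).card := by
    apply Finset.card_le_card_of_injOn w
    · intro x hx
      rw [Finset.mem_coe, Finset.mem_sdiff]
      exact ⟨Finset.mem_univ _, hwT x hx⟩
    · intro x hx y hy hxy
      obtain ⟨a, ha, hax⟩ := hwR x
      obtain ⟨b, hb, hby⟩ := hwR y
      have : ∃ c ∈ A, c x = y := by
        refine ⟨b⁻¹ * a, mul_mem (inv_mem hb) ha, ?_⟩
        rw [Equiv.Perm.mul_apply, hax, hxy, ← hby]
        exact b.symm_apply_apply y
      have := hrepEq x y this
      rw [← hrepT x hx, ← hrepT y hy]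
      exact this
  have hTd : T.card ≤ d := by
    rw [Finset.card_univ_diff, hcard] at hTcard
    have : T.card ≤ Fintype.card X := Finset.card_le_univ T
    rw [hcard] at this
    omega
  -- now prove transitivity
  by_contra hcon
  push_neg at hcon
  obtain ⟨x0, y0, h0⟩ := hcon
  set cls : X → Finset X := fun z => Finset.univ.filter (fun u => ∃ a ∈ A, a z = u) with hclsdef
  have hmemcls : ∀ z, z ∈ cls z := by
    intro z
    simp only [hclsdef, Finset.mem_filter, Finset.mem_univ, true_and]
    exact ⟨1, one_mem A, rfl⟩
  have hdisj : Disjoint (cls x0) (cls y0) := by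
    rw [Finset.disjoint_left]
    intro u hu1 hu2
    simp only [hclsdef, Finset.mem_filter, Finset.mem_univ, true_and] at hu1 hu2
    obtain ⟨a, ha, hax⟩ := hu1
    obtain ⟨b, hb, hby⟩ := hu2
    refine h0 (b⁻¹ * a) (mul_mem (inv_mem hb) ha) ?_
    rw [Equiv.Perm.mul_apply, hax, ← hby]
    exact b.symm_apply_apply y0
  have hsum : (cls x0).card + (cls y0).card ≤ 2 * d := by
    rw [← Finset.card_union_of_disjoint hdisj]
    have := Finset.card_le_univ (cls x0 ∪ cls y0)
    rw [hcard] at this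
    exact this
  obtain ⟨z, hzcard⟩ : ∃ z, (cls z).card ≤ d := by
    rcases le_or_gt (cls x0).card d with h | h
    · exact ⟨x0, h⟩
    · exact ⟨y0, by omega⟩
  obtain ⟨s, hclss, -, hsd⟩ := Finset.exists_subsuperset_card_eq (Finset.subset_univ (cls z))
    hzcard (by rw [Finset.card_univ, hcard]; omega)
  obtain ⟨t, hts, htd⟩ := Finset.exists_subset_card_eq
    (show d ≤ (Finset.univ \ T).card by rw [Finset.card_univ_diff, hcard]; omega)
  obtain ⟨g, hg, hgst⟩ := htrans s t hsd htd
  have hequiv : (cls z).image ⇑g = cls (g z) := by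
    ext u
    simp only [hclsdef, Finset.mem_image, Finset.mem_filter, Finset.mem_univ, true_and]
    constructor
    · rintro ⟨v, ⟨a, ha, rfl⟩, rfl⟩
      refine ⟨g * a * g⁻¹, hnorm g hg a ha, ?_⟩
      simp [Equiv.Perm.mul_apply]
    · rintro ⟨a, ha, rfl⟩
      have h1 := hnorm g⁻¹ (inv_mem hg) a ha
      rw [inv_inv] at h1
      refine ⟨(g⁻¹ * a * g) z, ⟨g⁻¹ * a * g, h1, rfl⟩, ?_⟩
      simp [Equiv.Perm.mul_apply]
  have hsubt : cls (g z) ⊆ t := by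
    rw [← hequiv, ← hgst]
    exact Finset.image_subset_image hclss
  have hrmem : rep (g z) ∈ cls (g z) := by
    simp only [hclsdef, Finset.mem_filter, Finset.mem_univ, true_and]
    obtain ⟨a, ha, hax⟩ := hrepR (g z)
    exact ⟨a⁻¹, inv_mem ha, (congrArg _ hax.symm).trans (a.symm_apply_apply _)⟩
  have h1 : rep (g z) ∈ t := hsubt hrmem
  have h2 : rep (g z) ∈ T := by
    simp only [hTdef, Finset.mem_image, Finset.mem_univ, true_and]
    exact ⟨g z, rfl⟩
  have := hts h1
  rw [Finset.mem_sdiff] at this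
  exact this.2 h2

private lemma key_lemma' {X : Type*} [Fintype X] [DecidableEq X] {d : ℕ} (hd3 : 3 ≤ d)
    (hcard : Fintype.card X = 2 * d)
    (G A W : Subgroup (Equiv.Perm X))
    (hnorm : ∀ g ∈ G, ∀ a ∈ A, g * a * g⁻¹ ∈ A)
    (hAtrans : ∀ x y : X, ∃ a ∈ A, a x = y)
    (hAcomm : ∀ a ∈ A, ∀ b ∈ A, a * b = b * a)
    (hW : ∀ a : Equiv.Perm X, a ∈ W ↔ a ∈ A ∧ a * a = 1)
    (p : ℕ) (hp : p.Prime) (hp1 : d < p) (hp2 : p < 2 * d)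
    (hpG : p ∣ Nat.card ↥G) :
    p = 2 * d - 1 ∧ p ∣ Nat.card ↥W - 1 := by
  classical
  haveI : Fact p.Prime := ⟨hp⟩
  haveI : Fintype ↥G := Fintype.ofFinite _
  -- regularity of A
  have hreg : ∀ a ∈ A, ∀ x : X, a x = x → a = 1 := by
    intro a ha x hax
    ext y
    obtain ⟨b, hb, rfl⟩ := hAtrans x y
    have h1 : (a * b) x = (b * a) x := by rw [hAcomm a ha b hb]
    simp only [Equiv.Perm.mul_apply, hax] at h1
    simpa using h1
  -- cardinality of A
  have hnonX : Nonempty X := by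
    rw [← Fintype.card_pos_iff, hcard]; omega
  obtain ⟨xb⟩ := hnonX
  have hAcard : Nat.card ↥A = 2 * d := by
    rw [← hcard, ← Nat.card_eq_fintype_card]
    apply Nat.card_eq_of_bijective (fun a : ↥A => (a : Equiv.Perm X) xb)
    constructor
    · rintro ⟨a, ha⟩ ⟨b, hb⟩ hab
      simp only at hab
      have h1 : (b⁻¹ * a) xb = xb := by
        rw [Equiv.Perm.mul_apply, hab]
        exact b.symm_apply_apply xb
      have h2 := hreg _ (mul_mem (inv_mem hb) ha) xb h1
      have : a = b := by
        have := congrArg (fun u => b * u) h2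
        simpa [mul_assoc] using this
      exact Subtype.ext this
    · intro y
      obtain ⟨a, ha, hax⟩ := hAtrans xb y
      exact ⟨⟨a, ha⟩, hax⟩
  -- get an element of order p in G
  obtain ⟨σ', hσ'⟩ := exists_prime_orderOf_dvd_card (G := ↥G) p
    (by rwa [← Nat.card_eq_fintype_card])
  set σ : Equiv.Perm X := (σ' : Equiv.Perm X) with hσdef
  have hσG : σ ∈ G := σ'.2
  have horder : orderOf σ = p := by
    rw [hσdef, ← hσ']
    exact orderOf_injective G.subtype G.subtype_injective σ'
  have hσp : σ ^ p = 1 := by rw [← horder]; exact pow_orderOf_eq_one σ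
  have hσ1 : σ ≠ 1 := by
    intro h
    rw [h, orderOf_one] at horder
    exact absurd horder.symm hp.one_lt.ne'
  -- fixed points of σ
  have hmod : Nat.card {x : X // σ x = x} ≡ 2 * d [MOD p] := by
    have := modeq_fix' hp σ hσp
    rwa [Nat.card_eq_fintype_card (α := X), hcard] at this
  have hpnd : ¬ p ∣ 2 * d := by
    intro hdvd
    obtain ⟨c, hc⟩ := hdvd
    rcases Nat.lt_or_ge c 2 with h | h
    · interval_cases c <;> omega
    · have : 2 * p ≤ p * c := by
        calc 2 * p = p * 2 := by ring
        _ ≤ p * c := Nat.mul_le_mul_left p h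
      omega
  have hfix_pos : 0 < Nat.card {x : X // σ x = x} := by
    rcases Nat.eq_zero_or_pos (Nat.card {x : X // σ x = x}) with h | h
    · exfalso
      apply hpnd
      rw [h] at hmod
      exact (Nat.modEq_zero_iff_dvd).mp hmod.symm
    · exact h
  have hnonfix : Nonempty {x : X // σ x = x} := by
    rcases Nat.card_pos_iff.mp hfix_pos with ⟨h, -⟩
    exact h
  obtain ⟨⟨x0, hx0⟩⟩ := hnonfix
  have hx0' : σ⁻¹ x0 = x0 := by
    conv_lhs => rw [← hx0]
    exact σ.symm_apply_apply x0
  -- the centralizer of σ in A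
  set C : Subgroup (Equiv.Perm X) := A ⊓ Subgroup.centralizer {σ} with hCdef
  have hCmem : ∀ a : Equiv.Perm X, a ∈ C ↔ a ∈ A ∧ σ * a = a * σ := by
    intro a
    rw [hCdef, Subgroup.mem_inf, Subgroup.mem_centralizer_iff]
    simp
  have hCcard : Nat.card ↥C = Nat.card {x : X // σ x = x} := by
    apply Nat.card_eq_of_bijective
      (fun a : ↥C => (⟨(a : Equiv.Perm X) x0, by
        obtain ⟨haA, haC⟩ := (hCmem _).mp a.2
        calc σ ((a : Equiv.Perm X) x0) = (σ * (a : Equiv.Perm X)) x0 := rfl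
        _ = ((a : Equiv.Perm X) * σ) x0 := by rw [haC]
        _ = (a : Equiv.Perm X) x0 := by rw [Equiv.Perm.mul_apply, hx0]⟩ : {x : X // σ x = x}))
    constructor
    · rintro ⟨a, ha⟩ ⟨b, hb⟩ hab
      simp only [Subtype.mk.injEq] at hab
      have haA := ((hCmem _).mp ha).1
      have hbA := ((hCmem _).mp hb).1
      have h1 : (b⁻¹ * a) x0 = x0 := by
        rw [Equiv.Perm.mul_apply, hab]
        exact b.symm_apply_apply x0
      have h2 := hreg _ (mul_mem (inv_mem hbA) haA) x0 h1
      apply Subtype.ext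
      have := congrArg (fun u => b * u) h2
      simpa [mul_assoc] using this
    · rintro ⟨x, hx⟩
      obtain ⟨a, ha, hax⟩ := hAtrans x0 x
      have ha' : σ * a * σ⁻¹ ∈ A := hnorm σ hσG a ha
      have heq : σ * a * σ⁻¹ = a := by
        have h1 : (a⁻¹ * (σ * a * σ⁻¹)) x0 = x0 := by
          simp only [Equiv.Perm.mul_apply, hx0']
          rw [hax, hx, ← hax]
          exact a.symm_apply_apply x0
        have h2 := hreg _ (mul_mem (inv_mem ha) ha') x0 h1
        have := congrArg (fun u => a * u) h2
        simpa [mul_assoc] using this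
      have hcomm : σ * a = a * σ := by
        have := congrArg (fun u => u * σ) heq
        simpa [mul_assoc] using this
      exact ⟨⟨a, (hCmem a).mpr ⟨ha, hcomm⟩⟩, Subtype.ext hax⟩
  set e := Nat.card ↥C with hedef
  have hedvd : e ∣ 2 * d := by
    rw [hedef, ← hAcard]
    exact Subgroup.card_dvd_of_le inf_le_left
  have hemod : e ≡ 2 * d [MOD p] := by rw [hCcard]; exact hmod
  have helt : e < 2 * d := by
    obtain ⟨x, hx⟩ : ∃ x : X, σ x ≠ x := by
      by_contra hall
      push_neg at hall
      exact hσ1 (Equiv.ext hall)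
    rw [hCcard, Nat.card_eq_fintype_card, ← hcard]
    exact Fintype.card_subtype_lt (x := x) hx
  have hepos : 0 < e := Nat.card_pos
  have hsub : p ∣ 2 * d - e := (Nat.modEq_iff_dvd' (le_of_lt helt)).mp hemod
  obtain ⟨c, hc⟩ := hsub
  have hc1 : c = 1 := by
    rcases Nat.lt_or_ge c 2 with h | h
    · interval_cases c
      · omega
      · rfl
    · exfalso
      have : 2 * p ≤ p * c := by
        calc 2 * p = p * 2 := by ring
        _ ≤ p * c := Nat.mul_le_mul_left p h
      omega
  rw [hc1, mul_one] at hc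
  -- e = 2d - p, e divides p
  have he2d : 2 * d = e + p := by omega
  have hedvdp : e ∣ p := by
    have h := Nat.dvd_sub hedvd (dvd_refl e)
    rwa [hc] at h
  have he1 : e = 1 := by
    rcases (Nat.Prime.eq_one_or_self_of_dvd hp e hedvdp) with h | h
    · exact h
    · exfalso; omega
  have hpeq : p = 2 * d - 1 := by omega
  refine ⟨hpeq, ?_⟩
  -- C is trivial
  have hCbot : C = ⊥ := Subgroup.card_eq_one.mp (by rw [← hedef]; exact he1)
  have hC1 : ∀ a ∈ A, σ * a = a * σ → a = 1 := by
    intro a ha hcomm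
    have : a ∈ C := (hCmem a).mpr ⟨ha, hcomm⟩
    rwa [hCbot, Subgroup.mem_bot] at this
  -- the conjugation action on W
  set ψ : Equiv.Perm ↥W :=
    { toFun := fun a => ⟨σ * (a : Equiv.Perm X) * σ⁻¹, by
        rw [hW]
        obtain ⟨haA, ha2⟩ := (hW _).mp a.2
        refine ⟨hnorm σ hσG _ haA, ?_⟩
        calc σ * ↑a * σ⁻¹ * (σ * ↑a * σ⁻¹) = σ * (↑a * ↑a) * σ⁻¹ := by group
        _ = 1 := by rw [ha2]; group⟩,
      invFun := fun a => ⟨σ⁻¹ * (a : Equiv.Perm X) * σ, by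
        rw [hW]
        obtain ⟨haA, ha2⟩ := (hW _).mp a.2
        have := hnorm σ⁻¹ (inv_mem hσG) _ haA
        rw [inv_inv] at this
        refine ⟨this, ?_⟩
        calc σ⁻¹ * ↑a * σ * (σ⁻¹ * ↑a * σ) = σ⁻¹ * (↑a * ↑a) * σ := by group
        _ = 1 := by rw [ha2]; group⟩,
      left_inv := fun a => by ext1; simp only; group,
      right_inv := fun a => by ext1; simp only; group } with hψdef
  have hψcoe : ∀ (n : ℕ) (a : ↥W), ((ψ ^ n) a : Equiv.Perm X) = σ ^ n * ↑a * (σ ^ n)⁻¹ := by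
    intro n
    induction n with
    | zero => intro a; simp
    | succ n ih =>
      intro a
      rw [pow_succ, Equiv.Perm.mul_apply, ih (ψ a)]
      have : ((ψ a : ↥W) : Equiv.Perm X) = σ * ↑a * σ⁻¹ := rfl
      rw [this]
      group
  have hψp : ψ ^ p = 1 := by
    ext1 a
    have := hψcoe p a
    rw [hσp] at this
    simp only [one_mul, inv_one, mul_one] at this
    simp only [Equiv.Perm.one_apply]
    exact Subtype.ext this
  have hfixW : Nat.card {a : ↥W // ψ a = a} = 1 := by
    rw [Nat.card_eq_one_iff_unique]
    constructor
    · constructor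
      rintro ⟨⟨a, haW⟩, ha⟩ ⟨⟨b, hbW⟩, hb⟩
      have h1 : σ * a * σ⁻¹ = a := congrArg (Subtype.val) ha
      have h2 : σ * b * σ⁻¹ = b := congrArg (Subtype.val) hb
      have ha1 : a = 1 := by
        apply hC1 a ((hW a).mp haW).1
        have := congrArg (fun u => u * σ) h1
        simpa [mul_assoc] using this
      have hb1 : b = 1 := by
        apply hC1 b ((hW b).mp hbW).1
        have := congrArg (fun u => u * σ) h2
        simpa [mul_assoc] using this
      apply Subtype.ext; apply Subtype.ext
      show a = b
      rw [ha1, hb1]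
    · refine ⟨⟨⟨1, (hW 1).mpr ⟨one_mem A, one_mul 1⟩⟩, ?_⟩⟩
      apply Subtype.ext
      show σ * 1 * σ⁻¹ = 1
      group
  have hmodW := modeq_fix' hp ψ hψp
  rw [hfixW] at hmodW
  have hWpos : 1 ≤ Nat.card ↥W := Nat.card_pos
  exact (Nat.modEq_iff_dvd' hWpos).mp hmodW

/-- Let `d ≥ 1`, `X` a finite set with `2d` elements, and `G` a solvable subgroup of `Sym(X)`
permuting transitively the `d`-element subsets of `X`. Then either `|X| = 2` and `G = Sym(X)`,
or `|X| = 4` and `G` is `Sym(X)` or `Alt(X)`. -/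
theorem solvable_transitive_on_d_subsets_even_classification
    {X : Type*} [Fintype X] [DecidableEq X] {d : ℕ} (hd : 1 ≤ d)
    (hcard : Fintype.card X = 2 * d)
    (G : Subgroup (Equiv.Perm X)) (hsolv : IsSolvable G)
    (htrans : ∀ s t : Finset X, s.card = d → t.card = d → ∃ g ∈ G, s.image ⇑g = t) :
    (Fintype.card X = 2 ∧ G = ⊤) ∨
    (Fintype.card X = 4 ∧ (G = ⊤ ∨ G = alternatingGroup X)) := by
  classical
  -- the binomial coefficient divides the order of G
  obtain ⟨s0, -, hs0⟩ := Finset.exists_subset_card_eq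
    (show d ≤ (Finset.univ : Finset X).card by rw [Finset.card_univ, hcard]; omega)
  letI instS : SMul ↥G {s : Finset X // s.card = d} :=
    ⟨fun g s => ⟨s.1.image ⇑(g : Equiv.Perm X), by
      rw [Finset.card_image_of_injective _ (g : Equiv.Perm X).injective]; exact s.2⟩⟩
  letI instMA : MulAction ↥G {s : Finset X // s.card = d} :=
    { one_smul := by
        intro s
        apply Subtype.ext
        show s.1.image ⇑((1 : ↥G) : Equiv.Perm X) = s.1
        simp
      mul_smul := by
        intro g h s
        apply Subtype.ext
        show s.1.image ⇑((↑(g * h) : Equiv.Perm X)) = (s.1.image ⇑(h : Equiv.Perm X)).image ⇑(g : Equiv.Perm X)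
        rw [Finset.image_image]
        congr 1 }
  have hchoose_dvd : (2 * d).choose d ∣ Nat.card ↥G := by
    have horb : MulAction.orbit ↥G (⟨s0, hs0⟩ : {s : Finset X // s.card = d}) = Set.univ := by
      apply Set.eq_univ_of_forall
      intro s
      obtain ⟨g, hg, hgs⟩ := htrans s0 s.1 hs0 s.2
      exact ⟨⟨g, hg⟩, Subtype.ext hgs⟩
    have hdvd := orbit_card_dvd' (H := ↥G) (⟨s0, hs0⟩ : {s : Finset X // s.card = d})
    rw [horb, Nat.card_congr (Equiv.Set.univ _), Nat.card_eq_fintype_card,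
      Fintype.card_finset_len, hcard] at hdvd
    exact hdvd
  have hch2 : 2 ≤ (2 * d).choose d := by
    obtain ⟨m, rfl⟩ : ∃ m, d = m + 1 := ⟨d - 1, by omega⟩
    have h1 : 2 * (m + 1) = (2 * m + 1) + 1 := by ring
    rw [h1, Nat.choose_succ_succ]
    have h2 : 0 < (2 * m + 1).choose m := Nat.choose_pos (by omega)
    have h3 : 0 < (2 * m + 1).choose (m.succ) := Nat.choose_pos (by omega)
    omega
  have hGcard2 : 2 ≤ Nat.card ↥G :=
    le_trans hch2 (Nat.le_of_dvd Nat.card_pos hchoose_dvd)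
  rcases Nat.lt_or_ge d 3 with hlt | hge
  · -- d = 1 or d = 2
    interval_cases d
    · -- d = 1
      left
      refine ⟨by omega, ?_⟩
      have hPerm : Nat.card (Equiv.Perm X) = 2 := by
        rw [Nat.card_eq_fintype_card, Fintype.card_perm, hcard]
        decide
      have hdvd : Nat.card ↥G ∣ 2 := hPerm ▸ Subgroup.card_subgroup_dvd_card G
      have hch : (2 * 1).choose 1 = 2 := by decide
      have h2 : Nat.card ↥G = 2 := Nat.dvd_antisymm hdvd (hch ▸ hchoose_dvd)
      exact Subgroup.eq_top_of_card_eq G (by rw [h2, hPerm])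
    · -- d = 2
      right
      refine ⟨by omega, ?_⟩
      have hcard4 : Fintype.card X = 4 := by omega
      have h6 : 6 ∣ Nat.card ↥G := by
        have hch : (2 * 2).choose 2 = 6 := by decide
        exact hch ▸ hchoose_dvd
      -- point transitivity
      have hPT : ∀ x y : X, ∃ g ∈ G, g x = y := by
        intro x y
        set F := Finset.univ.filter (fun z => ∃ g ∈ G, g x = z) with hFdef
        have hFinv : ∀ g ∈ G, ∀ z ∈ F, g z ∈ F := by
          intro g hg z hz
          simp only [hFdef, Finset.mem_filter, Finset.mem_univ, true_and] at hz ⊢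
          obtain ⟨g', hg', hg'x⟩ := hz
          exact ⟨g * g', mul_mem hg hg', by rw [Equiv.Perm.mul_apply, hg'x]⟩
        rcases inv_lemma' hd hcard G htrans F hFinv with h | h
        · exfalso
          have hx : x ∈ F := by
            simp only [hFdef, Finset.mem_filter, Finset.mem_univ, true_and]
            exact ⟨1, one_mem G, rfl⟩
          rw [h] at hx
          exact Finset.notMem_empty x hx
        · have hy : y ∈ F := h ▸ Finset.mem_univ y
          simpa only [hFdef, Finset.mem_filter, Finset.mem_univ, true_and] using hy
      -- 4 divides |G|
      have hnonX : Nonempty X := by rw [← Fintype.card_pos_iff, hcard]; omega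
      obtain ⟨x⟩ := hnonX
      letI instSX : SMul ↥G X := ⟨fun g z => (g : Equiv.Perm X) z⟩
      letI instMAX : MulAction ↥G X :=
        { one_smul := fun z => rfl
          mul_smul := fun g h z => rfl }
      have h4 : 4 ∣ Nat.card ↥G := by
        have horbX : MulAction.orbit ↥G x = Set.univ := by
          apply Set.eq_univ_of_forall
          intro y
          obtain ⟨g, hg, hgy⟩ := hPT x y
          exact ⟨⟨g, hg⟩, hgy⟩
        have hdvd := orbit_card_dvd' (H := ↥G) x
        rwa [horbX, Nat.card_congr (Equiv.Set.univ _), Nat.card_eq_fintype_card, hcard4] at hdvd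
      have h12 : 12 ∣ Nat.card ↥G := by
        have h3 : 3 ∣ Nat.card ↥G := dvd_trans (by norm_num) h6
        have hcop : Nat.Coprime 4 3 := by norm_num
        exact hcop.mul_dvd_of_dvd_of_dvd h4 h3
      have hPerm24 : Nat.card (Equiv.Perm X) = 24 := by
        rw [Nat.card_eq_fintype_card, Fintype.card_perm, hcard4]
        decide
      have h24 : Nat.card ↥G ∣ 24 := hPerm24 ▸ Subgroup.card_subgroup_dvd_card G
      have hval : Nat.card ↥G = 12 ∨ Nat.card ↥G = 24 := by
        obtain ⟨c, hc⟩ := h12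
        have hle : Nat.card ↥G ≤ 24 := Nat.le_of_dvd (by norm_num) h24
        have hpos : 0 < Nat.card ↥G := Nat.card_pos
        have hcb : c ≤ 2 := by omega
        interval_cases c <;> omega
      rcases hval with hv | hv
      · -- |G| = 12 : G is the alternating group
        right
        have hidx : G.index = 2 := by
          have := G.card_mul_index
          rw [hv, hPerm24] at this
          omega
        have hsq : ∀ x : Equiv.Perm X, x * x ∈ G := Subgroup.mul_self_mem_of_index_two hidx
        have hAle : alternatingGroup X ≤ G := by
          rw [← Equiv.Perm.closure_three_cycles_eq_alternating]
          rw [Subgroup.closure_le]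
          intro σ hσ
          have h3 : orderOf σ = 3 := (hσ : Equiv.Perm.IsThreeCycle σ).orderOf
          have hσ3 : σ ^ 3 = 1 := by rw [← h3]; exact pow_orderOf_eq_one σ
          have hmem := hsq (σ * σ)
          have heq : σ * σ * (σ * σ) = σ := by
            have h1 : σ * σ * (σ * σ) = σ ^ (2 + 2) := by
              have := pow_add σ 2 2
              rw [pow_two] at this
              exact this.symm
            have h2 : σ ^ (2 + 2) = σ ^ 3 * σ := by
              show σ ^ 4 = σ ^ 3 * σ
              rw [pow_succ]
            rw [h1, h2, hσ3, one_mul]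
          rwa [heq] at hmem
        have hnt : Nontrivial X := by
          rw [← Fintype.one_lt_card_iff_nontrivial, hcard4]; norm_num
        have hAcard : Nat.card ↥(alternatingGroup X) = 12 := by
          have h2m' : 2 * Nat.card ↥(alternatingGroup X) = 24 := by
            rw [Nat.card_eq_fintype_card, two_mul_card_alternatingGroup (α := X),
              Fintype.card_perm, hcard4]
            decide
          omega
        exact (Subgroup.eq_of_le_of_card_ge hAle (by rw [hAcard, hv])).symm
      · left
        exact Subgroup.eq_top_of_card_eq G (by rw [hv, hPerm24])
  · -- d ≥ 3 : contradiction
    exfalso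
    haveI hGnt : Nontrivial ↥G := Finite.one_lt_card_iff_nontrivial.mp (by omega)
    -- the last nontrivial term of the derived series
    have hPex : ∃ n, derivedSeries ↥G n = ⊥ := hsolv.solvable
    set n0 := Nat.find hPex with hn0def
    have hbot : derivedSeries ↥G n0 = ⊥ := Nat.find_spec hPex
    have hn0 : n0 ≠ 0 := by
      intro h
      rw [h, derivedSeries_zero] at hbot
      obtain ⟨y, hy⟩ := exists_ne (1 : ↥G)
      exact hy (Subgroup.mem_bot.mp (hbot ▸ Subgroup.mem_top y))
    set A0 := derivedSeries ↥G (n0 - 1) with hA0def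
    have hA0ne : A0 ≠ ⊥ := Nat.find_min hPex (by omega)
    have hA0succ : derivedSeries ↥G (n0 - 1 + 1) = ⊥ := by
      rw [show n0 - 1 + 1 = n0 by omega]
      exact hbot
    have hA0normal : A0.Normal := derivedSeries_normal (G := ↥G) (n0 - 1)
    set A : Subgroup (Equiv.Perm X) := A0.map G.subtype with hAdef
    have hAne : A ≠ ⊥ := by
      rw [hAdef, Ne, Subgroup.map_eq_bot_iff_of_injective _ G.subtype_injective]
      exact hA0ne
    have hnorm : ∀ g ∈ G, ∀ a ∈ A, g * a * g⁻¹ ∈ A := by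
      intro g hg a ha
      obtain ⟨a0, ha0, rfl⟩ := Subgroup.mem_map.mp ha
      refine Subgroup.mem_map.mpr ⟨⟨g, hg⟩ * a0 * ⟨g, hg⟩⁻¹, hA0normal.conj_mem a0 ha0 ⟨g, hg⟩, ?_⟩
      simp
    have hAcomm : ∀ a ∈ A, ∀ b ∈ A, a * b = b * a := by
      intro a ha b hb
      obtain ⟨a0, ha0, rfl⟩ := Subgroup.mem_map.mp ha
      obtain ⟨b0, hb0, rfl⟩ := Subgroup.mem_map.mp hb
      have hcomm : a0 * b0 = b0 * a0 := by
        have h1 : ⁅a0, b0⁆ ∈ ⁅A0, A0⁆ := Subgroup.commutator_mem_commutator ha0 hb0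
        rw [← derivedSeries_succ, hA0succ] at h1
        exact commutatorElement_eq_one_iff_mul_comm.mp (Subgroup.mem_bot.mp h1)
      calc G.subtype a0 * G.subtype b0 = G.subtype (a0 * b0) := (map_mul _ _ _).symm
      _ = G.subtype (b0 * a0) := by rw [hcomm]
      _ = G.subtype b0 * G.subtype a0 := map_mul _ _ _
    have hAtrans : ∀ x y : X, ∃ a ∈ A, a x = y :=
      trans_lemma' hd hcard G htrans
        (fun F hF => inv_lemma' hd hcard G htrans F hF) A hnorm hAne
    -- the 2-torsion subgroup of A
    set W : Subgroup (Equiv.Perm X) :=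
      { carrier := {a | a ∈ A ∧ a * a = 1}
        one_mem' := ⟨one_mem A, one_mul 1⟩
        mul_mem' := by
          rintro a b ⟨haA, ha2⟩ ⟨hbA, hb2⟩
          refine ⟨mul_mem haA hbA, ?_⟩
          calc a * b * (a * b) = a * (b * a) * b := by group
          _ = a * (a * b) * b := by rw [hAcomm b hbA a haA]
          _ = (a * a) * (b * b) := by group
          _ = 1 := by rw [ha2, hb2, one_mul]
        inv_mem' := by
          rintro a ⟨haA, ha2⟩
          refine ⟨inv_mem haA, ?_⟩
          rw [← mul_inv_rev, ha2, inv_one] } with hWdef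
    have hW : ∀ a : Equiv.Perm X, a ∈ W ↔ a ∈ A ∧ a * a = 1 := fun a => Iff.rfl
    have hWA : W ≤ A := fun a ha => ((hW a).mp ha).1
    have hWp2 : IsPGroup 2 ↥W := by
      intro g
      refine ⟨1, ?_⟩
      have h2 := ((hW _).mp g.2).2
      apply Subtype.ext
      rw [pow_one]
      push_cast
      rw [pow_two]
      exact h2
    haveI : Fact (Nat.Prime 2) := ⟨Nat.prime_two⟩
    obtain ⟨k, hk⟩ := (IsPGroup.iff_card (p := 2) (G := ↥W)).mp hWp2
    -- |A| = 2d (needed for |W| estimates)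
    have hnonX : Nonempty X := by rw [← Fintype.card_pos_iff, hcard]; omega
    obtain ⟨xb⟩ := hnonX
    have hreg : ∀ a ∈ A, ∀ x : X, a x = x → a = 1 := by
      intro a ha x hax
      ext y
      obtain ⟨b, hb, rfl⟩ := hAtrans x y
      have h1 : (a * b) x = (b * a) x := by rw [hAcomm a ha b hb]
      simp only [Equiv.Perm.mul_apply, hax] at h1
      simpa using h1
    have hAcard : Nat.card ↥A = 2 * d := by
      rw [← hcard, ← Nat.card_eq_fintype_card]
      apply Nat.card_eq_of_bijective (fun a : ↥A => (a : Equiv.Perm X) xb)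
      constructor
      · rintro ⟨a, ha⟩ ⟨b, hb⟩ hab
        simp only at hab
        have h1 : (b⁻¹ * a) xb = xb := by
          rw [Equiv.Perm.mul_apply, hab]
          exact b.symm_apply_apply xb
        have h2 := hreg _ (mul_mem (inv_mem hb) ha) xb h1
        apply Subtype.ext
        have := congrArg (fun u => b * u) h2
        simpa [mul_assoc] using this
      · intro y
        obtain ⟨a, ha, hax⟩ := hAtrans xb y
        exact ⟨⟨a, ha⟩, hax⟩
    -- |W| ≥ 2
    haveI : Fintype ↥A := Fintype.ofFinite _
    obtain ⟨b, hb⟩ := exists_prime_orderOf_dvd_card (G := ↥A) 2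
      (by rw [← Nat.card_eq_fintype_card, hAcard]; exact ⟨d, rfl⟩)
    have hb2 : (b : Equiv.Perm X) * (b : Equiv.Perm X) = 1 := by
      have : b * b = 1 := by
        rw [← pow_two, ← hb]
        exact pow_orderOf_eq_one b
      calc (b : Equiv.Perm X) * (b : Equiv.Perm X) = ((b * b : ↥A) : Equiv.Perm X) := by push_cast; rfl
      _ = 1 := by rw [this]; rfl
    have hbW : (b : Equiv.Perm X) ∈ W := (hW _).mpr ⟨b.2, hb2⟩
    have hbne : (b : Equiv.Perm X) ≠ 1 := by
      intro h
      have hb1 : b = 1 := Subtype.ext h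
      rw [hb1, orderOf_one] at hb
      omega
    have hWnt : Nontrivial ↥W :=
      ⟨⟨⟨(b : Equiv.Perm X), hbW⟩, ⟨1, one_mem W⟩, fun h => hbne (congrArg Subtype.val h)⟩⟩
    have hW2 : 2 ≤ Nat.card ↥W := Finite.one_lt_card_iff_nontrivial.mpr hWnt
    -- first prime
    obtain ⟨p, hpp, hpd, hple⟩ := Nat.exists_prime_lt_and_le_two_mul d (by omega)
    have hplt : p < 2 * d := by
      rcases lt_or_eq_of_le hple with h | h
      · exact h
      · exfalso
        have hp2 : p = 2 := (Nat.Prime.even_iff hpp).mp ⟨d, by omega⟩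
        omega
    have hpG : p ∣ Nat.card ↥G :=
      dvd_trans (hpp.dvd_choose hpd (by omega) (by omega)) hchoose_dvd
    obtain ⟨hpeq, hpW⟩ := key_lemma' hge hcard G A W hnorm hAtrans hAcomm hW p hpp hpd hplt hpG
    rw [hk] at hpW
    have hple2k : p ≤ 2 ^ k - 1 := Nat.le_of_dvd (by omega) hpW
    have h2kdvd : 2 ^ k ∣ 2 * d := by
      rw [← hk, ← hAcard]
      exact Subgroup.card_dvd_of_le hWA
    have h2kle : 2 ^ k ≤ 2 * d := Nat.le_of_dvd (by omega) h2kdvd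
    have h2keq : 2 ^ k = 2 * d := by omega
    -- second prime
    obtain ⟨q, hqp, hqd, hqle⟩ := Nat.exists_prime_lt_and_le_two_mul (d - 1) (by omega)
    have hk3 : 3 ≤ k := by
      by_contra h
      push_neg at h
      interval_cases k <;> omega
    have hqd' : d < q := by
      rcases Nat.lt_or_ge d q with h | h
      · exact h
      · exfalso
        have hqd2 : q = d := by omega
        have hsplit : 2 ^ k = 8 * 2 ^ (k - 3) := by
          calc 2 ^ k = 2 ^ (3 + (k - 3)) := by rw [show 3 + (k - 3) = k by omega]
          _ = 2 ^ 3 * 2 ^ (k - 3) := pow_add 2 3 (k - 3)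
          _ = 8 * 2 ^ (k - 3) := by norm_num
        have h4 : (4 : ℕ) ∣ q := ⟨2 ^ (k - 3), by omega⟩
        rcases Nat.Prime.eq_one_or_self_of_dvd hqp 4 h4 with h' | h'
        · omega
        · rw [← h'] at hqp
          exact absurd hqp (by norm_num)
    have hqlt : q < 2 * d := by omega
    have hqG : q ∣ Nat.card ↥G :=
      dvd_trans (hqp.dvd_choose hqd' (by omega) (by omega)) hchoose_dvd
    obtain ⟨hqeq, -⟩ := key_lemma' hge hcard G A W hnorm hAtrans hAcomm hW q hqp hqd' hqlt hqG
    omega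
end

section
/- Let ζ ∈ GL₆(F₂) act on E = F₂⁶ preserving the symplectic form, defined on the symplectic basis by ζ: e₁↦e₂, e₂↦e₃, e₃↦e₁+e₂, f₁↦f₁+f₂, f₂↦f₃, f₃↦f₁. Then ζ has order 7, the characteristic polynomial of ζ on V = span(e₁,e₂,e₃) is T³+T+1 and on V^∨ = span(f₁,f₂,f₃) is T³+T²+1, so that det(T−ζ, E) = (T⁷−1)/(T−1), and V, V^∨ are irreducible non-isomorphic F₂[ζ]-modules whose only ζ-submodules of E are 0, V, V^∨, E. -/
open Polynomial

/-- The matrix of `ζ` on `V = span(e₁,e₂,e₃)`: `e₁ ↦ e₂, e₂ ↦ e₃, e₃ ↦ e₁ + e₂`. -/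
def zetaV : Matrix (Fin 3) (Fin 3) (ZMod 2) := !![0, 0, 1; 1, 0, 1; 0, 1, 0]

/-- The matrix of `ζ` on `V^∨ = span(f₁,f₂,f₃)`: `f₁ ↦ f₁ + f₂, f₂ ↦ f₃, f₃ ↦ f₁`. -/
def zetaW : Matrix (Fin 3) (Fin 3) (ZMod 2) := !![1, 0, 1; 1, 0, 0; 0, 1, 0]

/-- `ζ` as a linear endomorphism of `E = V × V^∨ = 𝔽₂⁶`. -/
noncomputable def zetaE :
    ((Fin 3 → ZMod 2) × (Fin 3 → ZMod 2)) →ₗ[ZMod 2]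
      ((Fin 3 → ZMod 2) × (Fin 3 → ZMod 2)) :=
  (Matrix.toLin' zetaV).prodMap (Matrix.toLin' zetaW)

/-- The standard symplectic form on `E = 𝔽₂⁶`. -/
def sympForm (u v : (Fin 3 → ZMod 2) × (Fin 3 → ZMod 2)) : ZMod 2 :=
  (∑ i, u.1 i * v.2 i) + ∑ i, u.2 i * v.1 i

lemma zetaE_apply (p : (Fin 3 → ZMod 2) × (Fin 3 → ZMod 2)) :
    zetaE p = (zetaV.mulVec p.1, zetaW.mulVec p.2) := by
  simp [zetaE, Matrix.toLin'_apply]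

lemma key1 : ∀ a b : Fin 3 → ZMod 2,
    ∑ i, (zetaV.mulVec a) i * (zetaW.mulVec b) i = ∑ i, a i * b i := by decide

lemma key2 : ∀ a b : Fin 3 → ZMod 2,
    ∑ i, (zetaW.mulVec a) i * (zetaV.mulVec b) i = ∑ i, a i * b i := by decide

lemma h2 : (2 : (ZMod 2)[X]) = 0 := by
  rw [show (2 : (ZMod 2)[X]) = C 2 from (map_ofNat C 2).symm,
    show (2 : ZMod 2) = 0 from rfl, map_zero]

lemma cpV : zetaV.charpoly = X ^ 3 + X + 1 := by
  rw [Matrix.charpoly, Matrix.det_fin_three]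
  simp [Matrix.charmatrix_apply, zetaV, Matrix.vecHead, Matrix.vecTail]
  linear_combination (-1 - X : (ZMod 2)[X]) * h2

lemma cpW : zetaW.charpoly = X ^ 3 + X ^ 2 + 1 := by
  rw [Matrix.charpoly, Matrix.det_fin_three]
  simp [Matrix.charmatrix_apply, zetaW, Matrix.vecHead, Matrix.vecTail]
  linear_combination (-1 - X ^ 2 : (ZMod 2)[X]) * h2

lemma cpE : (Matrix.fromBlocks zetaV 0 0 zetaW).charpoly = ∑ i ∈ Finset.range 7, X ^ i := by
  rw [Matrix.charpoly_fromBlocks_zero₁₂, cpV, cpW]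
  simp [Finset.sum_range_succ]
  linear_combination (X ^ 3 : (ZMod 2)[X]) * h2

lemma powV : ∀ a : Fin 3 → ZMod 2,
    (zetaV * (zetaV * (zetaV * (zetaV * (zetaV * (zetaV * zetaV)))))).mulVec a = a := by decide
lemma powW : ∀ a : Fin 3 → ZMod 2,
    (zetaW * (zetaW * (zetaW * (zetaW * (zetaW * (zetaW * zetaW)))))).mulVec a = a := by decide

lemma ord7 : orderOf zetaE = 7 := by
  haveI : Fact (Nat.Prime 7) := ⟨by norm_num⟩
  apply orderOf_eq_prime
  · apply LinearMap.ext
    intro p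
    simp [pow_succ, Module.End.mul_apply, Module.End.one_apply, zetaE_apply, powV, powW]
  · intro h
    have := congrArg (fun f => (f ((fun _ => 1 : Fin 3 → ZMod 2), 0)).1) h
    simp [zetaE_apply] at this
    exact absurd this (by decide)

lemma pV_zero : ∀ x : Fin 3 → ZMod 2,
    zetaV.mulVec (zetaV.mulVec (zetaV.mulVec x)) + zetaV.mulVec x + x = 0 := by decide
lemma pV_W_ne : ∀ y : Fin 3 → ZMod 2, y ≠ 0 →
    zetaW.mulVec (zetaW.mulVec (zetaW.mulVec y)) + zetaW.mulVec y + y ≠ 0 := by decide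
lemma spanV : ∀ v w : Fin 3 → ZMod 2, v ≠ 0 → ∃ a b c : ZMod 2,
    w = a • v + b • zetaV.mulVec v + c • zetaV.mulVec (zetaV.mulVec v) := by decide
lemma spanW : ∀ v w : Fin 3 → ZMod 2, v ≠ 0 → ∃ a b c : ZMod 2,
    w = a • v + b • zetaW.mulVec v + c • zetaW.mulVec (zetaW.mulVec v) := by decide

lemma noniso : ¬ ∃ φ : (Fin 3 → ZMod 2) ≃ₗ[ZMod 2] (Fin 3 → ZMod 2),
    ∀ x, φ (zetaV.mulVec x) = zetaW.mulVec (φ x) := by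
  rintro ⟨φ, hφ⟩
  set v0 : Fin 3 → ZMod 2 := fun _ => 1 with hv0
  set x := φ.symm v0 with hx
  have hφx : φ x = v0 := φ.apply_symm_apply v0
  have h0 : φ (zetaV.mulVec (zetaV.mulVec (zetaV.mulVec x)) + zetaV.mulVec x + x) = 0 := by
    rw [pV_zero, map_zero]
  simp only [map_add, hφ, hφx] at h0
  exact pV_W_ne v0 (by decide) h0

lemma irred_aux (M : Matrix (Fin 3) (Fin 3) (ZMod 2))
    (hspan : ∀ v w : Fin 3 → ZMod 2, v ≠ 0 → ∃ a b c : ZMod 2,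
      w = a • v + b • M.mulVec v + c • M.mulVec (M.mulVec v))
    (U : Submodule (ZMod 2) (Fin 3 → ZMod 2))
    (hU : ∀ v ∈ U, M.mulVec v ∈ U) : U = ⊥ ∨ U = ⊤ := by
  rcases eq_or_ne U ⊥ with h | h
  · exact Or.inl h
  · right
    obtain ⟨v, hv, hv0⟩ := Submodule.exists_mem_ne_zero_of_ne_bot h
    rw [Submodule.eq_top_iff']
    intro w
    obtain ⟨a, b, c, hw⟩ := hspan v w hv0
    rw [hw]
    exact U.add_mem (U.add_mem (U.smul_mem _ hv) (U.smul_mem _ (hU v hv)))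
      (U.smul_mem _ (hU _ (hU v hv)))

lemma lattice : ∀ W : Submodule (ZMod 2) ((Fin 3 → ZMod 2) × (Fin 3 → ZMod 2)),
    (∀ v ∈ W, zetaE v ∈ W) →
    W = ⊥ ∨
    W = LinearMap.ker (LinearMap.snd (ZMod 2) (Fin 3 → ZMod 2) (Fin 3 → ZMod 2)) ∨
    W = LinearMap.ker (LinearMap.fst (ZMod 2) (Fin 3 → ZMod 2) (Fin 3 → ZMod 2)) ∨
    W = ⊤ := by
  intro W hW
  set U1 := W.comap (LinearMap.inl (ZMod 2) (Fin 3 → ZMod 2) (Fin 3 → ZMod 2)) with hU1d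
  set U2 := W.comap (LinearMap.inr (ZMod 2) (Fin 3 → ZMod 2) (Fin 3 → ZMod 2)) with hU2d
  have memU1 : ∀ x, x ∈ U1 ↔ ((x, (0 : Fin 3 → ZMod 2)) ∈ W) := by
    intro x; simp [hU1d, Submodule.mem_comap]
  have memU2 : ∀ y, y ∈ U2 ↔ (((0 : Fin 3 → ZMod 2), y) ∈ W) := by
    intro y; simp [hU2d, Submodule.mem_comap]
  have hU1inv : ∀ x ∈ U1, zetaV.mulVec x ∈ U1 := by
    intro x hx
    rw [memU1] at hx ⊢
    have h := hW _ hx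
    rw [zetaE_apply] at h
    simpa using h
  have hU2inv : ∀ y ∈ U2, zetaW.mulVec y ∈ U2 := by
    intro y hy
    rw [memU2] at hy ⊢
    have h := hW _ hy
    rw [zetaE_apply] at h
    simpa using h
  have key : U2 = ⊥ → ∀ x y, (x, y) ∈ W → y = 0 := by
    intro hU2 x y hxy
    by_contra hy
    have h1 := hW _ hxy
    rw [zetaE_apply] at h1
    have h2 := hW _ h1
    rw [zetaE_apply] at h2
    have h3 := hW _ h2
    rw [zetaE_apply] at h3
    have hs := W.add_mem (W.add_mem h3 h1) hxy
    simp only [Prod.mk_add_mk] at hs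
    rw [pV_zero x] at hs
    have : zetaW.mulVec (zetaW.mulVec (zetaW.mulVec y)) + zetaW.mulVec y + y ∈ U2 :=
      (memU2 _).2 hs
    rw [hU2, Submodule.mem_bot] at this
    exact pV_W_ne y hy this
  rcases irred_aux zetaV spanV U1 hU1inv with hU1 | hU1 <;>
    rcases irred_aux zetaW spanW U2 hU2inv with hU2 | hU2
  · left
    rw [Submodule.eq_bot_iff]
    rintro ⟨x, y⟩ hxy
    have hy : y = 0 := key hU2 x y hxy
    subst hy
    have hx : x ∈ U1 := (memU1 x).2 hxy
    rw [hU1, Submodule.mem_bot] at hx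
    rw [hx]
    rfl
  · right; right; left
    ext ⟨x, y⟩
    simp only [LinearMap.mem_ker, LinearMap.fst_apply]
    constructor
    · intro hxy
      have h0y : ((0 : Fin 3 → ZMod 2), y) ∈ W := (memU2 y).1 (by rw [hU2]; trivial)
      have := W.sub_mem hxy h0y
      simp only [Prod.mk_sub_mk, sub_zero, sub_self] at this
      have hx : x ∈ U1 := (memU1 x).2 this
      rwa [hU1, Submodule.mem_bot] at hx
    · intro hx
      subst hx
      exact (memU2 y).1 (by rw [hU2]; trivial)
  · right; left
    ext ⟨x, y⟩
    simp only [LinearMap.mem_ker, LinearMap.snd_apply]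
    constructor
    · intro hxy
      exact key hU2 x y hxy
    · intro hy
      subst hy
      exact (memU1 x).1 (by rw [hU1]; trivial)
  · right; right; right
    rw [Submodule.eq_top_iff']
    rintro ⟨x, y⟩
    have h1 : (x, (0 : Fin 3 → ZMod 2)) ∈ W := (memU1 x).1 (by rw [hU1]; trivial)
    have h2 : ((0 : Fin 3 → ZMod 2), y) ∈ W := (memU2 y).1 (by rw [hU2]; trivial)
    have := W.add_mem h1 h2
    simpa using this

/-- The element `ζ ∈ Sp₆(𝔽₂)` has order `7`; its characteristic polynomial on `V` is
`T³ + T + 1` and on `V^∨` is `T³ + T² + 1`, so `det(T − ζ, E) = (T⁷ − 1)/(T − 1)`;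
`V` and `V^∨` are irreducible non-isomorphic `𝔽₂[ζ]`-modules, and the only `ζ`-submodules
of `E` are `0`, `V`, `V^∨`, `E`. -/
theorem zeta_order_seven_and_submodule_lattice :
    (∀ u v, sympForm (zetaE u) (zetaE v) = sympForm u v) ∧
    orderOf zetaE = 7 ∧
    zetaV.charpoly = X ^ 3 + X + 1 ∧
    zetaW.charpoly = X ^ 3 + X ^ 2 + 1 ∧
    (Matrix.fromBlocks zetaV 0 0 zetaW).charpoly = ∑ i ∈ Finset.range 7, X ^ i ∧
    (¬ ∃ φ : (Fin 3 → ZMod 2) ≃ₗ[ZMod 2] (Fin 3 → ZMod 2),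
      ∀ x, φ (zetaV.mulVec x) = zetaW.mulVec (φ x)) ∧
    ∀ W : Submodule (ZMod 2) ((Fin 3 → ZMod 2) × (Fin 3 → ZMod 2)),
      (∀ v ∈ W, zetaE v ∈ W) →
      W = ⊥ ∨
      W = LinearMap.ker (LinearMap.snd (ZMod 2) (Fin 3 → ZMod 2) (Fin 3 → ZMod 2)) ∨
      W = LinearMap.ker (LinearMap.fst (ZMod 2) (Fin 3 → ZMod 2) (Fin 3 → ZMod 2)) ∨
      W = ⊤ := by
  refine ⟨?_, ord7, cpV, cpW, cpE, noniso, lattice⟩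
  intro u v
  rw [zetaE_apply, zetaE_apply]
  show (∑ i, (zetaV.mulVec u.1) i * (zetaW.mulVec v.2) i) +
      ∑ i, (zetaW.mulVec u.2) i * (zetaV.mulVec v.1) i = _
  rw [key1, key2]
  rfl
end
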